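/- Let (E,‖·‖_E) be a pseudo-normed real vector space and r < r' real numbers. For every f ∈ Σ^r_∞(E) one has sup_{n∈ℕ} 2^{−n(r'−r)} ‖S_n f‖_{Σ^{r'}_1} ≤ (1/(1 − 2^{r−r'})) ‖f‖_{Σ^r_∞}, and moreover 2^{−n(r'−r)} ‖S_n f‖_{Σ^{r'}_1} → 0 as n → ∞. -/

import Mathlib

open Filter
open scoped ENNReal NNReal

/-- A pseudo-norm on a real vector space: nonnegative, symmetric, subadditive,
and vanishing exactly at `0`. -/
structure IsPseudoNorm {E : Type*} [AddCommGroup E] [Module ℝ E] (N : E → ℝ) : Prop where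
  nonneg : ∀ x, 0 ≤ N x
  neg : ∀ x, N (-x) = N x
  add_le : ∀ x y, N (x + y) ≤ N x + N y
  eq_zero_iff : ∀ x, N x = 0 ↔ x = 0

/-- The `Σ^s_q(E)` pseudo-norm of a sequence `f : ℕ → E`:
`(∑_k 2^{qks} ‖f_k‖_E^q)^{1/q}` for `q < ∞` and `sup_k 2^{ks} ‖f_k‖_E` for `q = ∞`. -/
noncomputable def sigmaNorm {E : Type*} (N : E → ℝ) (s : ℝ) (q : ℝ≥0∞) (f : ℕ → E) : ℝ≥0∞ :=
  if q = ⊤ then ⨆ k : ℕ, ENNReal.ofReal ((2 : ℝ) ^ ((k : ℝ) * s) * N (f k))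
  else (∑' k : ℕ, ENNReal.ofReal ((2 : ℝ) ^ ((k : ℝ) * s) * N (f k)) ^ q.toReal) ^ (1 / q.toReal)

/-- Membership in `Σ^s_q(E)`: finiteness of the norm when `q < ∞`, and
`2^{ks}‖f_k‖_E → 0` when `q = ∞`. -/
def memSigma {E : Type*} (N : E → ℝ) (s : ℝ) (q : ℝ≥0∞) (f : ℕ → E) : Prop :=
  if q = ⊤ then Tendsto (fun k : ℕ => (2 : ℝ) ^ ((k : ℝ) * s) * N (f k)) atTop (nhds 0)
  else sigmaNorm N s q f < ⊤

/-- Friedrichs smoothing operator `S_n`: truncation of a sequence after index `n`. -/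
def smoothS {E : Type*} [Zero E] (n : ℕ) (f : ℕ → E) : ℕ → E :=
  fun k => if k ≤ n then f k else 0

lemma conv_tendsto (q : ℝ) (hq0 : 0 ≤ q) (hq1 : q < 1) (a : ℕ → ℝ)
    (ha0 : ∀ k, 0 ≤ a k) (ha : Tendsto a atTop (nhds 0)) :
    Tendsto (fun n => ∑ k ∈ Finset.range (n+1), q^(n-k) * a k) atTop (nhds 0) := by
  rw [NormedAddCommGroup.tendsto_nhds_zero]
  intro ε hε
  have h1q : 0 < 1 - q := by linarith
  set ε₁ : ℝ := ε * (1 - q) / 2 with hε₁def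
  have hε₁ : 0 < ε₁ := by positivity
  have hK : ∀ᶠ k in atTop, a k < ε₁ := by
    have := (NormedAddCommGroup.tendsto_nhds_zero.mp ha) ε₁ hε₁
    filter_upwards [this] with k hk
    calc a k ≤ |a k| := le_abs_self _
    _ = ‖a k‖ := rfl
    _ < ε₁ := hk
  obtain ⟨K, hKspec⟩ := eventually_atTop.mp hK
  set B : ℝ := ∑ k ∈ Finset.range K, a k with hBdef
  have hB0 : 0 ≤ B := Finset.sum_nonneg fun k _ => ha0 k
  have hpow : Tendsto (fun n : ℕ => q^(n-K) * B) atTop (nhds 0) := by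
    have h1 : Tendsto (fun m : ℕ => q^m) atTop (nhds 0) :=
      tendsto_pow_atTop_nhds_zero_of_lt_one hq0 hq1
    have h2 : Tendsto (fun n : ℕ => n - K) atTop atTop := tendsto_sub_atTop_nat K
    simpa using (h1.comp h2).mul_const B
  have hpow' : ∀ᶠ n in atTop, q^(n-K) * B < ε/2 := by
    have := (NormedAddCommGroup.tendsto_nhds_zero.mp hpow) (ε/2) (by positivity)
    filter_upwards [this] with n hn
    calc q^(n-K) * B ≤ |q^(n-K) * B| := le_abs_self _
    _ < ε/2 := hn
  filter_upwards [hpow', eventually_ge_atTop K] with n hn hnK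
  have hsplit : Finset.range (n+1) = Finset.range K ∪ Finset.Ico K (n+1) := by
    simp only [Finset.range_eq_Ico]
    exact (Finset.Ico_union_Ico_eq_Ico (Nat.zero_le _) (by omega)).symm
  have hnn : 0 ≤ ∑ k ∈ Finset.range (n+1), q^(n-k) * a k :=
    Finset.sum_nonneg fun k _ => mul_nonneg (pow_nonneg hq0 _) (ha0 k)
  rw [Real.norm_eq_abs, abs_of_nonneg hnn, hsplit,
    Finset.sum_union (by rw [Finset.range_eq_Ico]; exact Finset.Ico_disjoint_Ico_consecutive 0 K (n+1))]
  have hb1 : ∑ k ∈ Finset.range K, q^(n-k) * a k ≤ q^(n-K) * B := by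
    rw [hBdef, Finset.mul_sum]
    apply Finset.sum_le_sum
    intro k hk
    have hkK : k < K := Finset.mem_range.mp hk
    exact mul_le_mul_of_nonneg_right (pow_le_pow_of_le_one hq0 hq1.le (by omega)) (ha0 k)
  have hb2 : ∑ k ∈ Finset.Ico K (n+1), q^(n-k) * a k ≤ ε/2 := by
    have step : ∑ k ∈ Finset.Ico K (n+1), q^(n-k) * a k ≤ ∑ k ∈ Finset.Ico K (n+1), q^(n-k) * ε₁ := by
      apply Finset.sum_le_sum
      intro k hk
      exact mul_le_mul_of_nonneg_left (hKspec k (Finset.mem_Ico.mp hk).1).le (pow_nonneg hq0 _)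
    refine step.trans ?_
    rw [← Finset.sum_mul]
    have hgeo : ∑ k ∈ Finset.Ico K (n+1), q^(n-k) ≤ (1-q)⁻¹ := by
      have hsub : ∑ k ∈ Finset.Ico K (n+1), q^(n-k) ≤ ∑ k ∈ Finset.range (n+1), q^(n-k) := by
        apply Finset.sum_le_sum_of_subset_of_nonneg
        · rw [Finset.range_eq_Ico]; exact Finset.Ico_subset_Ico (Nat.zero_le _) le_rfl
        · intro k _ _; exact pow_nonneg hq0 _
      refine hsub.trans ?_
      have hr := Finset.sum_range_reflect (fun j => q^j) (n+1)
      simp only [Nat.add_sub_cancel] at hr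
      rw [hr]
      have := (hasSum_geometric_of_lt_one hq0 hq1)
      calc ∑ j ∈ Finset.range (n+1), q^j ≤ ∑' j : ℕ, q^j :=
            Summable.sum_le_tsum _ (fun k _ => pow_nonneg hq0 _) this.summable
      _ = (1-q)⁻¹ := this.tsum_eq
    calc (∑ k ∈ Finset.Ico K (n+1), q^(n-k)) * ε₁ ≤ (1-q)⁻¹ * ε₁ :=
          mul_le_mul_of_nonneg_right hgeo hε₁.le
    _ = ε/2 := by field_simp [hε₁def]; rw [hε₁def]; ring
  linarith

/-- Lemma 3.6 (i): for `r < r'` and `f ∈ Σ^r_∞(E)`,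
`sup_n 2^{-n(r'-r)} ‖S_n f‖_{Σ^{r'}_1} ≤ (1/(1-2^{r-r'})) ‖f‖_{Σ^r_∞}`, and moreover
`2^{-n(r'-r)} ‖S_n f‖_{Σ^{r'}_1} → 0` as `n → ∞`. -/
theorem smoothS_sigmaNorm_one_sup_le {E : Type*} [AddCommGroup E] [Module ℝ E]
    (N : E → ℝ) (hN : IsPseudoNorm N) (r r' : ℝ) (hrr' : r < r')
    (f : ℕ → E) (hf : memSigma N r ⊤ f) :
    (⨆ n : ℕ, ENNReal.ofReal ((2 : ℝ) ^ (-((n : ℝ) * (r' - r)))) *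
        sigmaNorm N r' 1 (smoothS n f))
      ≤ ENNReal.ofReal (1 / (1 - (2 : ℝ) ^ (r - r'))) * sigmaNorm N r ⊤ f ∧
    Tendsto (fun n : ℕ => ENNReal.ofReal ((2 : ℝ) ^ (-((n : ℝ) * (r' - r)))) *
        sigmaNorm N r' 1 (smoothS n f)) atTop (nhds 0) := by
  classical
  unfold memSigma at hf
  rw [if_pos rfl] at hf
  set q : ℝ := (2:ℝ) ^ (r - r') with hqdef
  have hq0 : 0 < q := Real.rpow_pos_of_pos two_pos _
  have hq1 : q < 1 := Real.rpow_lt_one_of_one_lt_of_neg one_lt_two (by linarith)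
  have h1q : 0 < 1 - q := by linarith
  set a : ℕ → ℝ := fun k => (2:ℝ) ^ ((k:ℝ) * r) * N (f k) with hadef
  have ha0 : ∀ k, 0 ≤ a k := fun k =>
    mul_nonneg (Real.rpow_nonneg (by norm_num) _) (hN.nonneg _)
  set g : ℕ → ℝ := fun n => ∑ k ∈ Finset.range (n+1), q^(n-k) * a k with hgdef
  have hsig1 : ∀ n, sigmaNorm N r' 1 (smoothS n f)
      = ∑ k ∈ Finset.range (n+1), ENNReal.ofReal ((2:ℝ) ^ ((k:ℝ) * r') * N (f k)) := by
    intro n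
    rw [sigmaNorm, if_neg (by norm_num)]
    simp only [ENNReal.toReal_one, ENNReal.rpow_one, one_div_one]
    rw [tsum_eq_sum (s := Finset.range (n+1))
      (by
        intro k hk
        have hkn : ¬ k ≤ n := by
          intro h; exact hk (Finset.mem_range.mpr (by omega))
        simp [smoothS, hkn, (hN.eq_zero_iff 0).mpr rfl])]
    apply Finset.sum_congr rfl
    intro k hk
    have hkn : k ≤ n := by have := Finset.mem_range.mp hk; omega
    simp [smoothS, hkn]
  have key : ∀ n : ℕ, ENNReal.ofReal ((2 : ℝ) ^ (-((n : ℝ) * (r' - r)))) *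
      sigmaNorm N r' 1 (smoothS n f) = ENNReal.ofReal (g n) := by
    intro n
    rw [hsig1 n, Finset.mul_sum, hgdef]
    rw [ENNReal.ofReal_sum_of_nonneg
      (fun k _ => mul_nonneg (pow_nonneg hq0.le _) (ha0 k))]
    apply Finset.sum_congr rfl
    intro k hk
    have hkn : k ≤ n := by have := Finset.mem_range.mp hk; omega
    rw [← ENNReal.ofReal_mul (Real.rpow_nonneg (by norm_num) _)]
    congr 1
    rw [hqdef, hadef]
    rw [← Real.rpow_natCast ((2:ℝ) ^ (r - r')) (n-k),
      ← Real.rpow_mul (by norm_num : (0:ℝ) ≤ 2), Nat.cast_sub hkn]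
    rw [← mul_assoc, ← Real.rpow_add two_pos, ← mul_assoc, ← Real.rpow_add two_pos]
    congr 1
    ring_nf
  have hsupf : sigmaNorm N r ⊤ f = ⨆ k : ℕ, ENNReal.ofReal (a k) := by
    rw [sigmaNorm, if_pos rfl]
  constructor
  · apply iSup_le
    intro n
    rw [key n, hsupf]
    have step1 : ENNReal.ofReal (g n)
        = ∑ k ∈ Finset.range (n+1), ENNReal.ofReal (q^(n-k)) * ENNReal.ofReal (a k) := by
      rw [hgdef, ENNReal.ofReal_sum_of_nonneg
        (fun k _ => mul_nonneg (pow_nonneg hq0.le _) (ha0 k))]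
      exact Finset.sum_congr rfl fun k _ => ENNReal.ofReal_mul (pow_nonneg hq0.le _)
    rw [step1]
    calc ∑ k ∈ Finset.range (n+1), ENNReal.ofReal (q^(n-k)) * ENNReal.ofReal (a k)
        ≤ ∑ k ∈ Finset.range (n+1), ENNReal.ofReal (q^(n-k)) * (⨆ j : ℕ, ENNReal.ofReal (a j)) :=
          Finset.sum_le_sum fun k _ => mul_le_mul_right (le_iSup (fun j : ℕ => ENNReal.ofReal (a j)) k) _
    _ = (∑ k ∈ Finset.range (n+1), ENNReal.ofReal (q^(n-k))) * (⨆ j : ℕ, ENNReal.ofReal (a j)) :=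
          (Finset.sum_mul _ _ _).symm
    _ ≤ ENNReal.ofReal (1 / (1 - q)) * (⨆ j : ℕ, ENNReal.ofReal (a j)) := by
          gcongr
          have hrefl : ∑ k ∈ Finset.range (n+1), ENNReal.ofReal (q^(n-k))
              = ∑ j ∈ Finset.range (n+1), ENNReal.ofReal q ^ j := by
            have hr := Finset.sum_range_reflect (fun j => ENNReal.ofReal (q^j)) (n+1)
            simp only [Nat.add_sub_cancel] at hr
            rw [hr]
            exact Finset.sum_congr rfl fun j _ => ENNReal.ofReal_pow hq0.le _
          rw [hrefl]
          calc ∑ j ∈ Finset.range (n+1), ENNReal.ofReal q ^ j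
              ≤ ∑' j : ℕ, ENNReal.ofReal q ^ j := ENNReal.sum_le_tsum _
          _ = (1 - ENNReal.ofReal q)⁻¹ := ENNReal.tsum_geometric _
          _ = ENNReal.ofReal (1 / (1 - q)) := by
              rw [one_div, ENNReal.ofReal_inv_of_pos h1q]
              congr 1
              rw [ENNReal.ofReal_sub _ hq0.le, ENNReal.ofReal_one]
  · have hcv := conv_tendsto q hq0.le hq1 a ha0 hf
    have h2 : Tendsto (fun n => ENNReal.ofReal (g n)) atTop (nhds 0) := by
      rw [← ENNReal.ofReal_zero]
      exact ENNReal.tendsto_ofReal hcv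
    simpa only [key] using h2
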